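/- Let n ≥ 2 and let p be a probability measure on the symmetric group S_n that is invariant under conjugation. Then the probability p({σ : i ∈ D(σ)}) is the same for all i ∈ {1,…,n−1}. -/

import Mathlib

noncomputable section

/-- `i ∈ D(σ)` for 1-based `i ∈ {1,…,n−1}`: `σ(i+1) < σ(i)`
(positions `i`, `i+1` are the 0-based indices `i−1`, `i`). -/
def descentAt {n : ℕ} (σ : Equiv.Perm (Fin n)) (i : ℕ) : Prop :=
  ∃ (h1 : i - 1 < n) (h2 : i < n), σ ⟨i, h2⟩ < σ ⟨i - 1, h1⟩

/-- The probability of the event `P` under the probability mass function `p` on `S_n`. -/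
def permProb {n : ℕ} (p : Equiv.Perm (Fin n) → ℝ) (P : Equiv.Perm (Fin n) → Prop) : ℝ :=
  ∑ σ, Set.indicator {σ' | P σ'} p σ

namespace Stmt9Aux
open Finset Equiv

variable {n : ℕ}

lemma exists_perm_ext {k : ℕ} (f g : Fin k ↪ Fin n) :
    ∃ ρ : Equiv.Perm (Fin n), ∀ i, ρ (f i) = g i := by
  classical
  have hcard : Fintype.card ((Set.range ⇑f)ᶜ : Set (Fin n)) =
      Fintype.card ((Set.range ⇑g)ᶜ : Set (Fin n)) := by
    rw [Fintype.card_compl_set, Fintype.card_compl_set, Fintype.card_range, Fintype.card_range]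
  let e₀ : (Set.range ⇑f : Set (Fin n)) ≃ (Set.range ⇑g : Set (Fin n)) :=
    (Equiv.ofInjective _ f.injective).symm.trans (Equiv.ofInjective _ g.injective)
  let e₁ := Fintype.equivOfCardEq hcard
  refine ⟨((Equiv.Set.compl e₀).symm e₁).1, fun i => ?_⟩
  have h := ((Equiv.Set.compl e₀).symm e₁).2 ⟨f i, Set.mem_range_self i⟩
  rw [h]
  simp only [e₀, Equiv.trans_apply]
  have : (Equiv.ofInjective ⇑f f.injective).symm ⟨f i, Set.mem_range_self i⟩ = i := by
    rw [Equiv.symm_apply_eq]; rfl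
  rw [this]
  rfl


lemma exists2 (x y x' y' : Fin n) (h : x ≠ y) (h' : x' ≠ y') :
    ∃ ρ : Equiv.Perm (Fin n), ρ x = x' ∧ ρ y = y' := by
  have hf : Function.Injective ![x, y] := by
    intro i j hij; fin_cases i <;> fin_cases j <;> simp_all
  have hg : Function.Injective ![x', y'] := by
    intro i j hij; fin_cases i <;> fin_cases j <;> simp_all
  obtain ⟨ρ, hρ⟩ := exists_perm_ext ⟨![x, y], hf⟩ ⟨![x', y'], hg⟩
  exact ⟨ρ, hρ 0, hρ 1⟩

lemma exists3 (x y z x' y' z' : Fin n) (h1 : x ≠ y) (h2 : x ≠ z) (h3 : y ≠ z)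
    (h1' : x' ≠ y') (h2' : x' ≠ z') (h3' : y' ≠ z') :
    ∃ ρ : Equiv.Perm (Fin n), ρ x = x' ∧ ρ y = y' ∧ ρ z = z' := by
  have hf : Function.Injective ![x, y, z] := by
    intro i j hij; fin_cases i <;> fin_cases j <;> simp_all
  have hg : Function.Injective ![x', y', z'] := by
    intro i j hij; fin_cases i <;> fin_cases j <;> simp_all
  obtain ⟨ρ, hρ⟩ := exists_perm_ext ⟨![x, y, z], hf⟩ ⟨![x', y', z'], hg⟩
  exact ⟨ρ, hρ 0, hρ 1, hρ 2⟩

lemma exists4 (x y z w x' y' z' w' : Fin n)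
    (h1 : x ≠ y) (h2 : x ≠ z) (h3 : x ≠ w) (h4 : y ≠ z) (h5 : y ≠ w) (h6 : z ≠ w)
    (h1' : x' ≠ y') (h2' : x' ≠ z') (h3' : x' ≠ w') (h4' : y' ≠ z') (h5' : y' ≠ w')
    (h6' : z' ≠ w') :
    ∃ ρ : Equiv.Perm (Fin n), ρ x = x' ∧ ρ y = y' ∧ ρ z = z' ∧ ρ w = w' := by
  have hf : Function.Injective ![x, y, z, w] := by
    intro i j hij; fin_cases i <;> fin_cases j <;> simp_all
  have hg : Function.Injective ![x', y', z', w'] := by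
    intro i j hij; fin_cases i <;> fin_cases j <;> simp_all
  obtain ⟨ρ, hρ⟩ := exists_perm_ext ⟨![x, y, z, w], hf⟩ ⟨![x', y', z', w'], hg⟩
  exact ⟨ρ, hρ 0, hρ 1, hρ 2, hρ 3⟩

variable (p : Equiv.Perm (Fin n) → ℝ)

def f (x y u v : Fin n) : ℝ :=
  ∑ σ : Equiv.Perm (Fin n), if σ x = u ∧ σ y = v then p σ else 0

def g (x u : Fin n) : ℝ :=
  ∑ σ : Equiv.Perm (Fin n), if σ x = u then p σ else 0

variable (hinv : ∀ σ ρ : Equiv.Perm (Fin n), p (ρ⁻¹ * σ * ρ) = p σ)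

include hinv in
lemma f_conj (ρ : Equiv.Perm (Fin n)) (x y u v : Fin n) :
    f p x y u v = f p (ρ x) (ρ y) (ρ u) (ρ v) := by
  unfold f
  refine Fintype.sum_equiv (MulAut.conj ρ).toEquiv _ _ (fun τ => ?_)
  have hp : p (ρ * τ * ρ⁻¹) = p τ := by
    have := hinv (ρ * τ * ρ⁻¹) ρ
    rw [show ρ⁻¹ * (ρ * τ * ρ⁻¹) * ρ = τ by group] at this; exact this.symm
  simp only [MulAut.conj_apply, MulEquiv.toEquiv_eq_coe, EquivLike.coe_coe, hp,
    Equiv.Perm.mul_apply, (show ∀ z, ρ⁻¹ (ρ z) = z from fun z => ρ.symm_apply_apply z), EmbeddingLike.apply_eq_iff_eq]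

include hinv in
lemma g_conj (ρ : Equiv.Perm (Fin n)) (x u : Fin n) :
    g p x u = g p (ρ x) (ρ u) := by
  unfold g
  refine Fintype.sum_equiv (MulAut.conj ρ).toEquiv _ _ (fun τ => ?_)
  have hp : p (ρ * τ * ρ⁻¹) = p τ := by
    have := hinv (ρ * τ * ρ⁻¹) ρ
    rw [show ρ⁻¹ * (ρ * τ * ρ⁻¹) * ρ = τ by group] at this; exact this.symm
  simp only [MulAut.conj_apply, MulEquiv.toEquiv_eq_coe, EquivLike.coe_coe, hp,
    Equiv.Perm.mul_apply, (show ∀ z, ρ⁻¹ (ρ z) = z from fun z => ρ.symm_apply_apply z), EmbeddingLike.apply_eq_iff_eq]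

lemma f_margin_v (x y u : Fin n) : ∑ v, f p x y u v = g p x u := by
  unfold f g
  rw [Finset.sum_comm]
  refine Finset.sum_congr rfl (fun σ _ => ?_)
  have : ∀ v : Fin n, (if σ x = u ∧ σ y = v then p σ else 0)
      = if v = σ y then (if σ x = u then p σ else 0) else 0 := by
    intro v; by_cases h1 : σ x = u <;> by_cases h2 : v = σ y <;> simp_all [eq_comm]
  simp only [this]
  rw [Finset.sum_ite_eq' Finset.univ (σ y)]
  simp

lemma f_margin_u (x y v : Fin n) : ∑ u, f p x y u v = g p y v := by
  unfold f g
  rw [Finset.sum_comm]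
  refine Finset.sum_congr rfl (fun σ _ => ?_)
  have : ∀ u : Fin n, (if σ x = u ∧ σ y = v then p σ else 0)
      = if u = σ x then (if σ y = v then p σ else 0) else 0 := by
    intro u; by_cases h1 : σ y = v <;> by_cases h2 : u = σ x <;> simp_all [eq_comm]
  simp only [this]
  rw [Finset.sum_ite_eq' Finset.univ (σ x)]
  simp

lemma f_diag (x y u : Fin n) (hxy : x ≠ y) : f p x y u u = 0 := by
  unfold f
  refine Finset.sum_eq_zero (fun σ _ => ?_)
  rw [if_neg]
  rintro ⟨h1, h2⟩
  exact hxy (σ.injective (h1.trans h2.symm))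


include hinv in
lemma formula (hn3 : 3 ≤ n) (a a' : Fin n) (ha : (a' : ℕ) = (a : ℕ) + 1)
    (hc : ({a, a'}ᶜ : Finset (Fin n)).card = n - 2) :
    ∑ σ : Equiv.Perm (Fin n), (if σ a' < σ a then p σ else 0)
      = g p a a + g p a a' - f p a a' a a'
        + ∑ i : Fin (n - 2), ∑ j : Fin (n - 2), (if j < i then
            f p a a' (Finset.orderEmbOfFin _ hc i) (Finset.orderEmbOfFin _ hc j) else 0) := by
  classical
  set s : Finset (Fin n) := ({a, a'}ᶜ : Finset (Fin n)) with hs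
  set E : Fin (n - 2) ↪o Fin n := Finset.orderEmbOfFin _ hc with hE
  have hne : a ≠ a' := by
    intro h; rw [h] at ha; omega
  have hmem_s : ∀ x : Fin n, x ∈ s ↔ x ≠ a ∧ x ≠ a' := by
    intro x; simp [hs, not_or]
  have hm0 : 0 < n - 2 := by omega
  set w₀ : Fin n := E ⟨0, hm0⟩ with hw₀def
  have hw₀ : w₀ ∈ s := Finset.orderEmbOfFin_mem _ hc _
  set rA : ℝ := f p a a' a w₀ + f p a a' a' w₀ with hrAdef
  -- all (c2+c4)-type terms are equal
  have hL1 : ∀ v ∈ s, f p a a' a v + f p a a' a' v = rA := by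
    intro v hv
    obtain ⟨hv1, hv2⟩ := (hmem_s v).1 hv
    obtain ⟨hw1, hw2⟩ := (hmem_s w₀).1 hw₀
    obtain ⟨ρ, h1, h2, h3⟩ := exists3 a a' v a a' w₀ hne (Ne.symm hv1) (Ne.symm hv2)
      hne (Ne.symm hw1) (Ne.symm hw2)
    have e1 := f_conj p hinv ρ a a' a v
    have e2 := f_conj p hinv ρ a a' a' v
    rw [h1, h2, h3] at e1 e2
    rw [e1, e2]
  have hL2 : ∀ u ∈ s, ∀ u' ∈ s,
      f p a a' u a + f p a a' u a' = f p a a' u' a + f p a a' u' a' := by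
    intro u hu u' hu'
    obtain ⟨hu1, hu2⟩ := (hmem_s u).1 hu
    obtain ⟨hu1', hu2'⟩ := (hmem_s u').1 hu'
    obtain ⟨ρ, h1, h2, h3⟩ := exists3 a a' u a a' u' hne (Ne.symm hu1) (Ne.symm hu2)
      hne (Ne.symm hu1') (Ne.symm hu2')
    have e1 := f_conj p hinv ρ a a' u a
    have e2 := f_conj p hinv ρ a a' u a'
    rw [h1, h2, h3] at e1 e2
    rw [e1, e2]
  -- splitting sums over s
  have hsplit : ∀ t : Fin n → ℝ, ∑ x ∈ s, t x = (∑ x, t x) - (t a + t a') := by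
    intro t
    have h0 := Finset.sum_add_sum_compl ({a, a'} : Finset (Fin n)) t
    rw [Finset.sum_pair hne] at h0
    rw [← hs] at h0
    linarith
  have hdiag1 : f p a a' a a = 0 := f_diag p a a' a hne
  have hdiag2 : f p a a' a' a' = 0 := f_diag p a a' a' hne
  have hm1 : ∑ v ∈ s, f p a a' a v = g p a a - f p a a' a a' := by
    rw [hsplit, f_margin_v, hdiag1]; ring
  have hm2 : ∑ v ∈ s, f p a a' a' v = g p a a' - f p a a' a' a := by
    rw [hsplit, f_margin_v, hdiag2]; ring
  have hm3 : ∑ u ∈ s, f p a a' u a = g p a' a - f p a a' a' a := by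
    rw [hsplit, f_margin_u, hdiag1]; ring
  have hm4 : ∑ u ∈ s, f p a a' u a' = g p a' a' - f p a a' a a' := by
    rw [hsplit, f_margin_u, hdiag2]; ring
  have hg1 : g p a' a = g p a a' := by
    have := g_conj p hinv (Equiv.swap a a') a' a
    rwa [Equiv.swap_apply_right, Equiv.swap_apply_left] at this
  have hg2 : g p a' a' = g p a a := by
    have := g_conj p hinv (Equiv.swap a a') a' a'
    rwa [Equiv.swap_apply_right] at this
  have hrA : (n - 2) • rA = g p a a + g p a a' - f p a a' a a' - f p a a' a' a := by
    have h1 : ∑ v ∈ s, (f p a a' a v + f p a a' a' v) = (n - 2) • rA := by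
      rw [Finset.sum_congr rfl hL1, Finset.sum_const, hc]
    rw [← h1, Finset.sum_add_distrib, hm1, hm2]; ring
  have hrr : f p a a' w₀ a + f p a a' w₀ a' = rA := by
    have h1 : ∑ u ∈ s, (f p a a' u a + f p a a' u a') =
        (n - 2) • (f p a a' w₀ a + f p a a' w₀ a') := by
      rw [Finset.sum_congr rfl (fun u hu => hL2 u hu w₀ hw₀), Finset.sum_const, hc]
    have h2 : (n - 2) • (f p a a' w₀ a + f p a a' w₀ a') = (n - 2) • rA := by
      rw [← h1, Finset.sum_add_distrib, hm3, hm4, hg1, hg2, hrA]; ring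
    have hnz : ((n - 2 : ℕ) : ℝ) ≠ 0 := by
      simp only [ne_eq, Nat.cast_eq_zero]; omega
    rw [nsmul_eq_mul, nsmul_eq_mul] at h2
    exact mul_left_cancel₀ hnz h2
  -- step 1: rewrite as a double sum over values
  have step1 : ∑ σ : Equiv.Perm (Fin n), (if σ a' < σ a then p σ else 0)
      = ∑ u, ∑ v, (if v < u then f p a a' u v else 0) := by
    have inner : ∀ σ : Equiv.Perm (Fin n), (if σ a' < σ a then p σ else 0)
        = ∑ u, ∑ v, (if v < u then (if σ a = u ∧ σ a' = v then p σ else 0) else 0) := by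
      intro σ
      have h1 : ∀ u v : Fin n, (if v < u then (if σ a = u ∧ σ a' = v then p σ else 0) else 0)
          = if σ a = u then (if σ a' = v then (if v < u then p σ else 0) else 0) else 0 := by
        intro u v
        by_cases e1 : σ a = u <;> by_cases e2 : σ a' = v <;> by_cases e3 : v < u <;>
          simp [e1, e2, e3]
      simp only [h1]
      rw [Finset.sum_eq_single_of_mem (σ a) (Finset.mem_univ _)
        (fun x _ hx => by simp [Ne.symm hx])]
      simp only [if_pos rfl]
      rw [Finset.sum_eq_single_of_mem (σ a') (Finset.mem_univ _)
        (fun y _ hy => by simp [Ne.symm hy])]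
      simp
    rw [Finset.sum_congr rfl (fun σ _ => inner σ), Finset.sum_comm]
    refine Finset.sum_congr rfl (fun u _ => ?_)
    rw [Finset.sum_comm]
    refine Finset.sum_congr rfl (fun v _ => ?_)
    by_cases h : v < u
    · simp only [if_pos h]; rfl
    · simp only [if_neg h, Finset.sum_const_zero]
  rw [step1]
  -- split the u-sum into u = a, u = a', u ∈ s
  rw [← Finset.sum_add_sum_compl ({a, a'} : Finset (Fin n))
    (fun u => ∑ v, if v < u then f p a a' u v else 0), Finset.sum_pair hne, ← hs]
  have hIioa : ∀ u : Fin n, ∑ v, (if v < u then f p a a' u v else 0)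
      = ∑ v ∈ Finset.Iio u, f p a a' u v := by
    intro u
    simp only [← Finset.mem_Iio]
    rw [Finset.sum_ite_mem, Finset.univ_inter]
  have hIioa' : Finset.Iio a' = insert a (Finset.Iio a) := by
    ext w
    simp only [Finset.mem_Iio, Finset.mem_insert, Fin.lt_def, Fin.ext_iff, ha]
    omega
  have Ha' : ∑ v ∈ Finset.Iio a', f p a a' a' v
      = f p a a' a' a + ∑ v ∈ Finset.Iio a, f p a a' a' v := by
    rw [hIioa', Finset.sum_insert (by simp)]
  -- the sum over u ∈ s
  have Hs : ∑ u ∈ s, ∑ v, (if v < u then f p a a' u v else 0)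
      = (∑ u ∈ Finset.Ioi a', (f p a a' u a + f p a a' u a'))
        + ∑ u ∈ s, ∑ v ∈ s, (if v < u then f p a a' u v else 0) := by
    have hu : ∀ u ∈ s, ∑ v, (if v < u then f p a a' u v else 0)
        = ((if a' < u then (f p a a' u a + f p a a' u a') else 0)
          + ∑ v ∈ s, (if v < u then f p a a' u v else 0)) := by
      intro u hu
      obtain ⟨hu1, hu2⟩ := (hmem_s u).1 hu
      have hu1' : (u : ℕ) ≠ (a : ℕ) := fun h => hu1 (Fin.ext h)
      have hu2' : (u : ℕ) ≠ (a' : ℕ) := fun h => hu2 (Fin.ext h)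
      rw [← Finset.sum_add_sum_compl ({a, a'} : Finset (Fin n))
        (fun v => if v < u then f p a a' u v else 0), Finset.sum_pair hne, ← hs]
      congr 1
      by_cases h : a' < u
      · have h2 : a < u := by
          rw [Fin.lt_def] at h ⊢; omega
        simp [h, h2]
      · have h2 : ¬ a < u := by
          rw [Fin.lt_def] at h ⊢; omega
        simp [h, h2]
    rw [Finset.sum_congr rfl hu, Finset.sum_add_distrib]
    congr 1
    have : ∀ u : Fin n, (if a' < u then (f p a a' u a + f p a a' u a') else 0)
        = (if u ∈ Finset.Ioi a' then (f p a a' u a + f p a a' u a') else 0) := by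
      intro u; simp [Finset.mem_Ioi]
    rw [Finset.sum_congr rfl (fun u _ => this u), Finset.sum_ite_mem]
    congr 1
    ext u
    simp only [Finset.mem_inter, Finset.mem_Ioi, hmem_s, Fin.lt_def]
    constructor
    · rintro ⟨_, h⟩; exact h
    · intro h
      refine ⟨⟨?_, ?_⟩, h⟩
      · rintro rfl; omega
      · rintro rfl; omega
  rw [hIioa a, hIioa a', Ha', Hs]
  -- the three "boundary" sums
  have hIoisub : ∀ u ∈ Finset.Ioi a', u ∈ s := by
    intro u hu
    rw [Finset.mem_Ioi, Fin.lt_def] at hu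
    rw [hmem_s]
    refine ⟨?_, ?_⟩ <;> rintro rfl <;> omega
  have hIiosub : ∀ v ∈ Finset.Iio a, v ∈ s := by
    intro v hv
    rw [Finset.mem_Iio, Fin.lt_def] at hv
    rw [hmem_s]
    refine ⟨?_, ?_⟩ <;> rintro rfl <;> omega
  have hX : (∑ v ∈ Finset.Iio a, f p a a' a v) + (∑ v ∈ Finset.Iio a, f p a a' a' v)
      = (a : ℕ) • rA := by
    rw [← Finset.sum_add_distrib,
      Finset.sum_congr rfl (fun v hv => hL1 v (hIiosub v hv)), Finset.sum_const, Fin.card_Iio]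
  have hY : (∑ u ∈ Finset.Ioi a', (f p a a' u a + f p a a' u a'))
      = (n - 1 - (a' : ℕ)) • rA := by
    rw [Finset.sum_congr rfl (fun u hu => (hL2 u (hIoisub u hu) w₀ hw₀).trans hrr),
      Finset.sum_const, Fin.card_Ioi]
  -- the generic double sum, reindexed
  have hBG : ∑ u ∈ s, ∑ v ∈ s, (if v < u then f p a a' u v else 0)
      = ∑ i : Fin (n - 2), ∑ j : Fin (n - 2), (if j < i then f p a a' (E i) (E j) else 0) := by
    have hinner : ∀ u : Fin n, ∑ v ∈ s, (if v < u then f p a a' u v else 0)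
        = ∑ j : Fin (n - 2), (if E j < u then f p a a' u (E j) else 0) := by
      intro u
      rw [← Finset.sum_coe_sort s (fun v => if v < u then f p a a' u v else 0),
        ← Equiv.sum_comp (s.orderIsoOfFin hc).toEquiv
          (fun x : {x // x ∈ s} => if (x : Fin n) < u then f p a a' u x else 0)]
      refine Finset.sum_congr rfl (fun j _ => ?_)
      simp only [RelIso.coe_fn_toEquiv]
      rw [Finset.coe_orderIsoOfFin_apply]
      try rfl
    rw [Finset.sum_congr rfl (fun u _ => hinner u),
      ← Finset.sum_coe_sort s
        (fun u => ∑ j : Fin (n - 2), (if E j < u then f p a a' u (E j) else 0)),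
      ← Equiv.sum_comp (s.orderIsoOfFin hc).toEquiv
        (fun x : {x // x ∈ s} =>
          ∑ j : Fin (n - 2), (if E j < (x : Fin n) then f p a a' x (E j) else 0))]
    refine Finset.sum_congr rfl (fun i _ => ?_)
    simp only [RelIso.coe_fn_toEquiv]
    rw [Finset.coe_orderIsoOfFin_apply]
    refine Finset.sum_congr rfl (fun j _ => ?_)
    have : (E j < E i) ↔ j < i := E.lt_iff_lt
    by_cases h : j < i
    · rw [if_pos (this.mpr h), if_pos h]
      try rfl
    · rw [if_neg (fun hh => h (this.mp hh)), if_neg h]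
  rw [hBG]
  have hcnt : (a : ℕ) + (n - 1 - (a' : ℕ)) = n - 2 := by
    have := a'.isLt; omega
  have hcast : ((a : ℕ) : ℝ) * rA + ((n - 1 - (a' : ℕ) : ℕ) : ℝ) * rA = ((n - 2 : ℕ) : ℝ) * rA := by
    rw [← add_mul, ← Nat.cast_add, hcnt]
  rw [nsmul_eq_mul] at hX hY hrA
  linarith

include hinv in
lemma key (hn3 : 3 ≤ n) (a a' b b' : Fin n) (ha : (a' : ℕ) = (a : ℕ) + 1)
    (hb : (b' : ℕ) = (b : ℕ) + 1)
    (hca : ({a, a'}ᶜ : Finset (Fin n)).card = n - 2)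
    (hcb : ({b, b'}ᶜ : Finset (Fin n)).card = n - 2) :
    ∑ σ : Equiv.Perm (Fin n), (if σ a' < σ a then p σ else 0)
      = ∑ σ : Equiv.Perm (Fin n), (if σ b' < σ b then p σ else 0) := by
  classical
  rw [formula p hinv hn3 a a' ha hca, formula p hinv hn3 b b' hb hcb]
  have hnea : a ≠ a' := by intro h; rw [h] at ha; omega
  have hneb : b ≠ b' := by intro h; rw [h] at hb; omega
  obtain ⟨ρ, h1, h2⟩ := exists2 a a' b b' hnea hneb
  have e1 : g p a a = g p b b := by
    have := g_conj p hinv ρ a a; rwa [h1] at this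
  have e2 : g p a a' = g p b b' := by
    have := g_conj p hinv ρ a a'; rwa [h1, h2] at this
  have e3 : f p a a' a a' = f p b b' b b' := by
    have := f_conj p hinv ρ a a' a a'; rwa [h1, h2] at this
  rw [e1, e2, e3]
  congr 1
  refine Finset.sum_congr rfl (fun i _ => Finset.sum_congr rfl (fun j _ => ?_))
  by_cases h : j < i
  · rw [if_pos h, if_pos h]
    set EA := Finset.orderEmbOfFin ({a, a'}ᶜ : Finset (Fin n)) hca with hEA
    set EB := Finset.orderEmbOfFin ({b, b'}ᶜ : Finset (Fin n)) hcb with hEB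
    have hmemA : ∀ k, EA k ≠ a ∧ EA k ≠ a' := by
      intro k
      have hm := Finset.orderEmbOfFin_mem ({a, a'}ᶜ : Finset (Fin n)) hca k
      rw [Finset.mem_compl] at hm
      simp only [Finset.mem_insert, Finset.mem_singleton, not_or] at hm
      exact hm
    have hmemB : ∀ k, EB k ≠ b ∧ EB k ≠ b' := by
      intro k
      have hm := Finset.orderEmbOfFin_mem ({b, b'}ᶜ : Finset (Fin n)) hcb k
      rw [Finset.mem_compl] at hm
      simp only [Finset.mem_insert, Finset.mem_singleton, not_or] at hm
      exact hm
    have hij : i ≠ j := (ne_of_gt h)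
    obtain ⟨ρ', k1, k2, k3, k4⟩ := exists4 a a' (EA i) (EA j) b b' (EB i) (EB j)
      hnea ((hmemA i).1).symm ((hmemA j).1).symm ((hmemA i).2).symm ((hmemA j).2).symm
      (fun hh => hij (EA.injective hh))
      hneb ((hmemB i).1).symm ((hmemB j).1).symm ((hmemB i).2).symm ((hmemB j).2).symm
      (fun hh => hij (EB.injective hh))
    have := f_conj p hinv ρ' a a' (EA i) (EA j)
    rwa [k1, k2, k3, k4] at this
  · rw [if_neg h, if_neg h]

end Stmt9Aux

theorem stmt_9 (n : ℕ) (hn : 2 ≤ n) (p : Equiv.Perm (Fin n) → ℝ)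
    (hpos : ∀ σ, 0 ≤ p σ) (hsum : ∑ σ, p σ = 1)
    (hinv : ∀ σ ρ : Equiv.Perm (Fin n), p (ρ⁻¹ * σ * ρ) = p σ) :
    ∀ i j : ℕ, 1 ≤ i → i ≤ n - 1 → 1 ≤ j → j ≤ n - 1 →
      permProb p (fun σ => descentAt σ i) = permProb p (fun σ => descentAt σ j) := by
  classical
  intro i j hi1 hi2 hj1 hj2
  rcases eq_or_ne i j with rfl | hij
  · rfl
  have hn3 : 3 ≤ n := by omega
  have hconv : ∀ k : ℕ, 1 ≤ k → k ≤ n - 1 →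
      ∀ (hk1 : k - 1 < n) (hk2 : k < n),
      permProb p (fun σ => descentAt σ k)
        = ∑ σ : Equiv.Perm (Fin n), (if σ ⟨k, hk2⟩ < σ ⟨k - 1, hk1⟩ then p σ else 0) := by
    intro k hk1' hk2' hk1 hk2
    unfold permProb
    refine Finset.sum_congr rfl (fun σ _ => ?_)
    rw [Set.indicator_apply]
    refine if_congr ?_ rfl rfl
    simp only [Set.mem_setOf_eq, descentAt]
    constructor
    · rintro ⟨hh1, hh2, hh⟩; exact hh
    · intro hh; exact ⟨hk1, hk2, hh⟩
  have hi1n : i - 1 < n := by omega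
  have hi2n : i < n := by omega
  have hj1n : j - 1 < n := by omega
  have hj2n : j < n := by omega
  rw [hconv i hi1 hi2 hi1n hi2n, hconv j hj1 hj2 hj1n hj2n]
  have hcard : ∀ a a' : Fin n, a ≠ a' → ({a, a'}ᶜ : Finset (Fin n)).card = n - 2 := by
    intro a a' hne
    rw [Finset.card_compl]
    rw [Finset.card_insert_of_notMem (by simpa using hne), Finset.card_singleton]
    simp
  have hane : (⟨i - 1, hi1n⟩ : Fin n) ≠ ⟨i, hi2n⟩ := by
    simp only [ne_eq, Fin.mk.injEq]; omega
  have hbne : (⟨j - 1, hj1n⟩ : Fin n) ≠ ⟨j, hj2n⟩ := by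
    simp only [ne_eq, Fin.mk.injEq]; omega
  exact Stmt9Aux.key p hinv hn3 ⟨i - 1, hi1n⟩ ⟨i, hi2n⟩ ⟨j - 1, hj1n⟩ ⟨j, hj2n⟩
    (by simp; omega) (by simp; omega) (hcard _ _ hane) (hcard _ _ hbne)
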